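/- Let A be a C*-algebra and p ∈ A⁺ with ‖p‖ = 1. If p has the order unit property in A (for every x ∈ A such that [[kp, x], [x*, kp]] ≥ 0 in M₂(A) for some k > 0, one has [[‖x‖·p, x], [x*, ‖x‖·p]] ≥ 0), then p is a projection: p = p². -/

import Mathlib

variable {A : Type*} [NonUnitalCStarAlgebra A]

/-- Positivity in the C*-algebra `M₂(A)`: an element of a C*-algebra is positive
iff it is of the form `star y * y`. -/
def M2Pos (m : Matrix (Fin 2) (Fin 2) A) : Prop := ∃ y, m = star y * y
variable [PartialOrder A] [StarOrderedRing A]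

lemma m2pos_entry (m : Matrix (Fin 2) (Fin 2) A) (hm : M2Pos m) (c d : A) :
    0 ≤ star c * m 0 0 * c + star c * m 0 1 * d + star d * m 1 0 * c + star d * m 1 1 * d := by
  obtain ⟨y, rfl⟩ := hm
  have h1 : ∀ l, 0 ≤ star (y l 0 * c + y l 1 * d) * (y l 0 * c + y l 1 * d) :=
    fun l => star_mul_self_nonneg _
  calc (0:A) ≤ star (y 0 0 * c + y 0 1 * d) * (y 0 0 * c + y 0 1 * d)
        + star (y 1 0 * c + y 1 1 * d) * (y 1 0 * c + y 1 1 * d) := add_nonneg (h1 0) (h1 1)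
    _ = _ := by
      simp only [Matrix.mul_apply, Matrix.star_apply, Fin.sum_univ_two, star_add, star_mul,
        mul_add, add_mul, mul_assoc]
      abel

set_option maxHeartbeats 2000000 in
theorem stmt_10 (p : A) (hp : 0 ≤ p) (hn : ‖p‖ = 1)
    (hou : ∀ x ∈ {x : A | ∃ k : ℝ, 0 < k ∧ M2Pos !![k • p, x; star x, k • p]},
      M2Pos !![‖x‖ • p, x; star x, ‖x‖ • p]) :
    p = p * p := by
  by_contra hne
  have hsa : IsSelfAdjoint p := hp.isSelfAdjoint
  -- Find a point of the quasispectrum strictly between 0 and 1.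
  have hex : ∃ l ∈ quasispectrum ℝ p, l ≠ 0 ∧ l ≠ 1 := by
    by_contra hc
    push_neg at hc
    apply hne
    have h1 : cfcₙ (fun t : ℝ => t) p = cfcₙ (fun t : ℝ => t * t) p := by
      apply cfcₙ_congr
      intro t ht
      rcases eq_or_ne t 0 with h | h
      · simp [h]
      · have := hc t ht h
        simp [this]
    rw [cfcₙ_id' ℝ p, cfcₙ_mul (fun t : ℝ => t) (fun t : ℝ => t) p (by fun_prop) (by simp)
      (by fun_prop) (by simp), cfcₙ_id' ℝ p] at h1
    exact h1
  obtain ⟨l, hlS, hl0, hl1⟩ := hex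
  have hlpos : 0 < l :=
    lt_of_le_of_ne (quasispectrum_nonneg_of_nonneg p hp l hlS) (Ne.symm hl0)
  have hlle : l ≤ 1 := by
    have h := norm_apply_le_norm_cfcₙ (fun t : ℝ => t) p hlS (by fun_prop) (by simp) hsa
    rw [cfcₙ_id' ℝ p, hn] at h
    calc l ≤ |l| := le_abs_self l
      _ ≤ 1 := h
  have hllt : l < 1 := lt_of_le_of_ne hlle hl1
  set k : ℝ := 2 / l with hk
  have hkpos : 0 < k := by positivity
  set f : ℝ → ℝ := fun t => min 1 (k * t) with hfdef
  have hfc : Continuous f := by fun_prop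
  have hf0 : f 0 = 0 := by simp [hfdef]
  set x := cfcₙ f p with hxdef
  have hxsa : IsSelfAdjoint x := cfcₙ_predicate f p
  -- bounds for f on the (nonnegative) quasispectrum
  have hfb : ∀ t ∈ quasispectrum ℝ p, 0 ≤ f t ∧ f t ≤ k * t ∧ f t ≤ 1 := by
    intro t ht
    have htpos : 0 ≤ t := quasispectrum_nonneg_of_nonneg p hp t ht
    refine ⟨le_min one_pos.le (by positivity), min_le_right _ _, min_le_left _ _⟩
  -- x belongs to the set in the hypothesis
  have hxmem : x ∈ {x : A | ∃ k : ℝ, 0 < k ∧ M2Pos !![k • p, x; star x, k • p]} := by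
    refine ⟨k, hkpos, ?_⟩
    set g : ℝ → ℝ := fun t => (Real.sqrt (k * t + f t) + Real.sqrt (k * t - f t)) / 2 with hgdef
    set h : ℝ → ℝ := fun t => (Real.sqrt (k * t + f t) - Real.sqrt (k * t - f t)) / 2 with hhdef
    have hgc : Continuous g := by fun_prop
    have hhc : Continuous h := by fun_prop
    have hg0 : g 0 = 0 := by simp [hgdef, hf0]
    have hh0 : h 0 = 0 := by simp [hhdef, hf0]
    set a := cfcₙ g p with hadef
    set b := cfcₙ h p with hbdef
    have hasa : IsSelfAdjoint a := cfcₙ_predicate g p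
    have hbsa : IsSelfAdjoint b := cfcₙ_predicate h p
    have hdiag : a * a + b * b = k • p := by
      rw [hadef, hbdef, ← cfcₙ_mul g g p (hgc.continuousOn) hg0 (hgc.continuousOn) hg0,
        ← cfcₙ_mul h h p (hhc.continuousOn) hh0 (hhc.continuousOn) hh0,
        ← cfcₙ_add (fun t => g t * g t) (fun t => h t * h t) p
          (by fun_prop) (by simp [hg0]) (by fun_prop) (by simp [hh0]),
        ← cfcₙ_const_mul_id k p hsa]
      apply cfcₙ_congr
      intro t ht
      obtain ⟨hf1, hf2, hf3⟩ := hfb t ht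
      have hP : 0 ≤ k * t + f t := by linarith
      have hM : 0 ≤ k * t - f t := by linarith
      have hsp := Real.sq_sqrt hP
      have hsm := Real.sq_sqrt hM
      simp only [hgdef, hhdef]
      nlinarith [hsp, hsm]
    have hoff : a * b + b * a = x := by
      rw [hadef, hbdef, ← cfcₙ_mul g h p (hgc.continuousOn) hg0 (hhc.continuousOn) hh0,
        ← cfcₙ_mul h g p (hhc.continuousOn) hh0 (hgc.continuousOn) hg0,
        ← cfcₙ_add (fun t => g t * h t) (fun t => h t * g t) p
          (by fun_prop) (by simp [hg0]) (by fun_prop) (by simp [hh0]), hxdef]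
      apply cfcₙ_congr
      intro t ht
      obtain ⟨hf1, hf2, hf3⟩ := hfb t ht
      have hP : 0 ≤ k * t + f t := by linarith
      have hM : 0 ≤ k * t - f t := by linarith
      have hsp := Real.sq_sqrt hP
      have hsm := Real.sq_sqrt hM
      simp only [hgdef, hhdef]
      nlinarith [hsp, hsm]
    refine ⟨!![a, b; b, a], ?_⟩
    have hstar : star (!![a, b; b, a]) = !![a, b; b, a] := by
      ext i j
      fin_cases i <;> fin_cases j <;>
        simp [Matrix.star_apply, hasa.star_eq, hbsa.star_eq]
    rw [hstar, Matrix.mul_fin_two, hxsa.star_eq, add_comm (b * a) (a * b),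
      add_comm (b * b) (a * a), hdiag, hoff]
  have hM := hou x hxmem
  set n : ℝ := ‖x‖ with hndef
  have hn0 : 0 ≤ n := norm_nonneg x
  have hn1 : n ≤ 1 := by
    rw [hndef, hxdef]
    apply norm_cfcₙ_le
    intro t ht
    obtain ⟨hf1, hf2, hf3⟩ := hfb t ht
    rw [Real.norm_eq_abs, abs_of_nonneg hf1]
    exact hf3
  have hpos := m2pos_entry _ hM p (-p)
  rw [hxsa.star_eq] at hpos
  simp only [hsa.star_eq, star_neg, mul_neg, neg_mul, neg_neg] at hpos
  have h00 : !![n • p, x; x, n • p] 0 0 = n • p := rfl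
  have h01 : !![n • p, x; x, n • p] 0 1 = x := rfl
  have h10 : !![n • p, x; x, n • p] 1 0 = x := rfl
  have h11 : !![n • p, x; x, n • p] 1 1 = n • p := rfl
  rw [h00, h01, h10, h11] at hpos
  -- hpos : 0 ≤ p * (n • p) * p + -(p * x * p) + -(p * x * p) + p * (n • p) * p
  have ep3 : cfcₙ (fun t : ℝ => t * t * t) p = p * p * p := by
    rw [cfcₙ_mul (fun t : ℝ => t * t) (fun t : ℝ => t) p (by fun_prop) (by simp)
      (by fun_prop) (by simp),
      cfcₙ_mul (fun t : ℝ => t) (fun t : ℝ => t) p (by fun_prop) (by simp)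
      (by fun_prop) (by simp), cfcₙ_id' ℝ p]
  have epxp : cfcₙ (fun t : ℝ => t * f t * t) p = p * x * p := by
    rw [cfcₙ_mul (fun t : ℝ => t * f t) (fun t : ℝ => t) p (by fun_prop) (by simp [hf0])
      (by fun_prop) (by simp),
      cfcₙ_mul (fun t : ℝ => t) f p (by fun_prop) (by simp) (hfc.continuousOn) hf0,
      cfcₙ_id' ℝ p, hxdef]
  have ecfc : cfcₙ (fun t : ℝ => n • (t * t * t) + -(t * f t * t) + -(t * f t * t)
      + n • (t * t * t)) p
      = n • (p * p * p) + -(p * x * p) + -(p * x * p) + n • (p * p * p) := by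
    rw [cfcₙ_add (fun t : ℝ => n • (t * t * t) + -(t * f t * t) + -(t * f t * t))
        (fun t : ℝ => n • (t * t * t)) p (by fun_prop) (by simp [hf0]) (by fun_prop) (by simp),
      cfcₙ_add (fun t : ℝ => n • (t * t * t) + -(t * f t * t)) (fun t : ℝ => -(t * f t * t)) p
        (by fun_prop) (by simp [hf0]) (by fun_prop) (by simp [hf0]),
      cfcₙ_add (fun t : ℝ => n • (t * t * t)) (fun t : ℝ => -(t * f t * t)) p
        (by fun_prop) (by simp) (by fun_prop) (by simp [hf0]),
      cfcₙ_smul n (fun t : ℝ => t * t * t) p (by fun_prop) (by simp), ep3,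
      cfcₙ_neg (fun t : ℝ => t * f t * t) p, epxp]
  have e : p * (n • p) * p = n • (p * p * p) := by
    rw [mul_smul_comm, smul_mul_assoc]
  rw [e] at hpos
  have hpos2 : (0:A) ≤ cfcₙ (fun t : ℝ => n • (t * t * t) + -(t * f t * t) + -(t * f t * t)
      + n • (t * t * t)) p := by
    rw [ecfc]
    exact hpos
  have hcontra := (cfcₙ_nonneg_iff _ p (by fun_prop) (by simp [hf0]) hsa).mp hpos2 l hlS
  have hfl : f l = 1 := by
    have : k * l = 2 := by rw [hk]; field_simp
    simp [hfdef, this]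
  rw [hfl] at hcontra
  simp only [smul_eq_mul, mul_one] at hcontra
  have h1 : n * (l * l * l) ≤ l * l * l := by
    nlinarith [mul_pos (mul_pos hlpos hlpos) hlpos]
  have h2 : l * l * l < l * l := by nlinarith [mul_pos hlpos hlpos]
  linarith
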